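/- Let V be a 2n-dimensional real inner product space and J, F skew-symmetric endomorphisms of V with J² = -Id and JF = FJ. Then there exists an orthonormal basis v_1,…,v_{2n} of V and real numbers η_1,…,η_n such that J v_{2i-1} = v_{2i}, J v_{2i} = -v_{2i-1}, F v_{2i-1} = η_i v_{2i}, and F v_{2i} = -η_i v_{2i-1} for i = 1,…,n. -/

import Mathlib

open RealInnerProductSpace Module

private lemma mem_orthogonal_pair {V : Type*} [NormedAddCommGroup V] [InnerProductSpace ℝ V]
    {u w x : V} (hu : ⟪u, x⟫ = 0) (hw : ⟪w, x⟫ = 0) :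
    x ∈ (Submodule.span ℝ (Set.range ![u, w]))ᗮ := by
  rw [Submodule.mem_orthogonal]
  intro y hy
  induction hy using Submodule.span_induction with
  | mem y hy =>
      obtain ⟨i, rfl⟩ := hy
      fin_cases i
      · exact hu
      · exact hw
  | zero => exact inner_zero_left x
  | add a b _ _ ha hb => rw [inner_add_left, ha, hb, add_zero]
  | smul c a _ ha => rw [real_inner_smul_left, ha, mul_zero]

private theorem aux_normal_form : ∀ (n : ℕ) (V : Type*) [NormedAddCommGroup V]
    [InnerProductSpace ℝ V] [FiniteDimensional ℝ V],
    finrank ℝ V = 2 * n → ∀ (J F : V →ₗ[ℝ] V),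
    (∀ x y : V, ⟪J x, y⟫ = -⟪x, J y⟫) →
    (∀ x y : V, ⟪F x, y⟫ = -⟪x, F y⟫) →
    (∀ x : V, J (J x) = -x) →
    (∀ x : V, J (F x) = F (J x)) →
    ∃ (v : Fin (2 * n) → V) (η : Fin n → ℝ), Orthonormal ℝ v ∧
      ∀ i : Fin n,
        J (v ⟨2 * i, by have := i.isLt; omega⟩) = v ⟨2 * i + 1, by have := i.isLt; omega⟩ ∧
        J (v ⟨2 * i + 1, by have := i.isLt; omega⟩) = -v ⟨2 * i, by have := i.isLt; omega⟩ ∧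
        F (v ⟨2 * i, by have := i.isLt; omega⟩) =
          η i • v ⟨2 * i + 1, by have := i.isLt; omega⟩ ∧
        F (v ⟨2 * i + 1, by have := i.isLt; omega⟩) =
          -(η i) • v ⟨2 * i, by have := i.isLt; omega⟩ := by
  intro n
  induction n with
  | zero =>
      intro V _ _ _ hdim J F _ _ _ _
      refine ⟨fun k => absurd k.isLt (by omega), fun i => absurd i.isLt (by omega),
        ⟨fun i => absurd i.isLt (by omega), ?_⟩, fun i => absurd i.isLt (by omega)⟩
      intro i
      exact absurd i.isLt (by omega)
  | succ n ih =>
      intro V _ _ _ hdim J F hJskew hFskew hJ2 hJF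
      have hnt : Nontrivial V := nontrivial_of_finrank_pos (R := ℝ) (by omega)
      set G : Module.End ℝ V := J ∘ₗ F with hG
      have hGsym : G.IsSymmetric := by
        intro x y
        show ⟪J (F x), y⟫ = ⟪x, J (F y)⟫
        rw [hJskew, hFskew, neg_neg, hJF]
      obtain ⟨μ, hμ⟩ : ∃ μ : ℝ, Module.End.HasEigenvalue G μ :=
        ⟨_, hGsym.hasEigenvalue_iSup_of_finiteDimensional⟩
      obtain ⟨v₀, hv₀⟩ := hμ.exists_hasEigenvector
      have hv₀ne : v₀ ≠ 0 := hv₀.2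
      set u : V := ‖v₀‖⁻¹ • v₀ with hu_def
      have hnu : ‖u‖ = 1 := by
        rw [hu_def, norm_smul, norm_inv, norm_norm,
          inv_mul_cancel₀ (norm_ne_zero_iff.2 hv₀ne)]
      have hGu : J (F u) = μ • u := by
        have h0 : G v₀ = μ • v₀ := hv₀.apply_eq_smul
        have h1 : G u = μ • u := by rw [hu_def, map_smul, h0, smul_comm]
        simpa [hG, LinearMap.comp_apply] using h1
      have hJJu : J (J u) = -u := hJ2 u
      have hFu : F u = (-μ) • J u := by
        have h1 : J (J (F u)) = J (μ • u) := congrArg J hGu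
        rw [hJ2, J.map_smul] at h1
        rw [neg_smul, ← h1, neg_neg]
      have hFJu : F (J u) = μ • u := by rw [← hJF, hGu]
      -- inner product facts
      have huu : ⟪u, u⟫ = 1 := by
        rw [real_inner_self_eq_norm_mul_norm, hnu]; norm_num
      have hwu : ⟪J u, u⟫ = 0 := by
        have h := hJskew u u
        have h2 := real_inner_comm u (J u)
        linarith
      have huw : ⟪u, J u⟫ = 0 := by rw [real_inner_comm]; exact hwu
      have hww : ⟪J u, J u⟫ = 1 := by
        rw [hJskew u (J u), hJJu, inner_neg_right, huu]; norm_num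
      -- the plane W and its orthogonal complement
      set W : Submodule ℝ V := Submodule.span ℝ (Set.range ![u, J u]) with hW
      have hmemu : u ∈ W := Submodule.subset_span ⟨0, rfl⟩
      have hmemw : J u ∈ W := Submodule.subset_span ⟨1, rfl⟩
      have horthpair : Orthonormal ℝ ![u, J u] := by
        have hnJu : ‖J u‖ = 1 := by
          have := real_inner_self_eq_norm_sq (J u)
          rw [hww] at this
          nlinarith [norm_nonneg (J u)]
        rw [orthonormal_iff_ite]
        intro i j
        fin_cases i <;> fin_cases j <;>
          simp [huu, huw, hwu, hww, hnu, hnJu]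
      have hdimW : finrank ℝ W = 2 := by
        rw [hW, finrank_span_eq_card horthpair.linearIndependent]
        simp
      have hdimWc : finrank ℝ ↥Wᗮ = 2 * n := by
        have := Submodule.finrank_add_finrank_orthogonal W
        omega
      -- invariance of Wᗮ
      have hJinv : ∀ x ∈ Wᗮ, J x ∈ Wᗮ := by
        intro x hx
        apply mem_orthogonal_pair
        · have h1 := hJskew u x
          have h2 : ⟪J u, x⟫ = 0 := Submodule.inner_right_of_mem_orthogonal hmemw hx
          linarith
        · have h2 : ⟪u, x⟫ = 0 := Submodule.inner_right_of_mem_orthogonal hmemu hx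
          rw [hJskew u (J x), hJ2 x, inner_neg_right, h2]
          simp
      have hFinv : ∀ x ∈ Wᗮ, F x ∈ Wᗮ := by
        intro x hx
        have h2 : ⟪u, x⟫ = 0 := Submodule.inner_right_of_mem_orthogonal hmemu hx
        have h3 : ⟪J u, x⟫ = 0 := Submodule.inner_right_of_mem_orthogonal hmemw hx
        apply mem_orthogonal_pair
        · have h1 := hFskew u x
          have h4 : ⟪F u, x⟫ = 0 := by
            rw [hFu, real_inner_smul_left, h3, mul_zero]
          linarith
        · have h1 := hFskew (J u) x
          have h4 : ⟪F (J u), x⟫ = 0 := by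
            rw [hFJu, real_inner_smul_left, h2, mul_zero]
          linarith
      -- restrict to Wᗮ and apply the inductive hypothesis
      set J' : ↥Wᗮ →ₗ[ℝ] ↥Wᗮ := J.restrict hJinv with hJ'
      set F' : ↥Wᗮ →ₗ[ℝ] ↥Wᗮ := F.restrict hFinv with hF'
      have hcoeJ : ∀ x : ↥Wᗮ, (J' x : V) = J x := fun x => J.restrict_coe_apply hJinv x
      have hcoeF : ∀ x : ↥Wᗮ, (F' x : V) = F x := fun x => F.restrict_coe_apply hFinv x
      obtain ⟨v', η', horth', hprop'⟩ := ih ↥Wᗮ hdimWc J' F'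
        (fun x y => by
          rw [Submodule.coe_inner, Submodule.coe_inner, hcoeJ, hcoeJ]; exact hJskew _ _)
        (fun x y => by
          rw [Submodule.coe_inner, Submodule.coe_inner, hcoeF, hcoeF]; exact hFskew _ _)
        (fun x => by
          apply Subtype.ext
          rw [hcoeJ, hcoeJ, hJ2]
          simp)
        (fun x => by
          apply Subtype.ext
          rw [hcoeJ, hcoeF, hcoeF, hcoeJ, hJF])
      classical
      -- assemble the family on V
      set v : Fin (2 * (n + 1)) → V := fun k =>
        if h : (k : ℕ) < 2 then (if (k : ℕ) = 0 then u else J u)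
        else ↑(v' ⟨(k : ℕ) - 2, by have := k.isLt; omega⟩) with hv
      set η : Fin (n + 1) → ℝ := fun i =>
        if h : (i : ℕ) = 0 then -μ
        else η' ⟨(i : ℕ) - 1, by have := i.isLt; omega⟩ with hη
      have hv0 : ∀ k : Fin (2 * (n + 1)), (k : ℕ) = 0 → v k = u := by
        intro k hk
        rw [hv]
        simp only
        rw [dif_pos (by omega), if_pos hk]
      have hv1 : ∀ k : Fin (2 * (n + 1)), (k : ℕ) = 1 → v k = J u := by
        intro k hk
        rw [hv]
        simp only
        rw [dif_pos (by omega), if_neg (by omega)]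
      have hvbig : ∀ (k : Fin (2 * (n + 1))) (m : Fin (2 * n)), (k : ℕ) = (m : ℕ) + 2 →
          v k = ↑(v' m) := by
        intro k m hk
        rw [hv]
        simp only
        rw [dif_neg (by omega)]
        have hkm : (⟨(k : ℕ) - 2, by have := k.isLt; omega⟩ : Fin (2 * n)) = m := by
          apply Fin.ext
          show (k : ℕ) - 2 = (m : ℕ)
          omega
        rw [hkm]
      -- orthonormality
      rw [orthonormal_iff_ite] at horth'
      have horthv : Orthonormal ℝ v := by
        rw [orthonormal_iff_ite]
        intro k l
        by_cases hk : (k : ℕ) < 2 <;> by_cases hl : (l : ℕ) < 2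
        · by_cases hk0 : (k : ℕ) = 0 <;> by_cases hl0 : (l : ℕ) = 0
          · have hkl : k = l := Fin.ext (by omega)
            rw [hv0 k hk0, hv0 l hl0, if_pos hkl, huu]
          · have hkl : k ≠ l := Fin.ne_of_val_ne (by omega)
            rw [hv0 k hk0, hv1 l (by omega), if_neg hkl, huw]
          · have hkl : k ≠ l := Fin.ne_of_val_ne (by omega)
            rw [hv1 k (by omega), hv0 l hl0, if_neg hkl, hwu]
          · have hkl : k = l := Fin.ext (by omega)
            rw [hv1 k (by omega), hv1 l (by omega), if_pos hkl, hww]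
        · have hkl : k ≠ l := Fin.ne_of_val_ne (by omega)
          have hmem : (↑(v' ⟨(l : ℕ) - 2, by have := l.isLt; omega⟩) : V) ∈ Wᗮ :=
            (v' _).2
          rw [hvbig l ⟨(l : ℕ) - 2, by have := l.isLt; omega⟩
            (show (l : ℕ) = (l : ℕ) - 2 + 2 by omega), if_neg hkl]
          by_cases hk0 : (k : ℕ) = 0
          · rw [hv0 k hk0]
            exact Submodule.inner_right_of_mem_orthogonal hmemu hmem
          · rw [hv1 k (by omega)]
            exact Submodule.inner_right_of_mem_orthogonal hmemw hmem
        · have hkl : k ≠ l := Fin.ne_of_val_ne (by omega)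
          have hmem : (↑(v' ⟨(k : ℕ) - 2, by have := k.isLt; omega⟩) : V) ∈ Wᗮ :=
            (v' _).2
          rw [hvbig k ⟨(k : ℕ) - 2, by have := k.isLt; omega⟩
            (show (k : ℕ) = (k : ℕ) - 2 + 2 by omega), if_neg hkl, real_inner_comm]
          by_cases hl0 : (l : ℕ) = 0
          · rw [hv0 l hl0]
            exact Submodule.inner_right_of_mem_orthogonal hmemu hmem
          · rw [hv1 l (by omega)]
            exact Submodule.inner_right_of_mem_orthogonal hmemw hmem
        · rw [hvbig k ⟨(k : ℕ) - 2, by have := k.isLt; omega⟩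
            (show (k : ℕ) = (k : ℕ) - 2 + 2 by omega),
            hvbig l ⟨(l : ℕ) - 2, by have := l.isLt; omega⟩
            (show (l : ℕ) = (l : ℕ) - 2 + 2 by omega)]
          have h := horth' ⟨(k : ℕ) - 2, by have := k.isLt; omega⟩
            ⟨(l : ℕ) - 2, by have := l.isLt; omega⟩
          rw [Submodule.coe_inner] at h
          rw [h]
          by_cases hab : k = l
          · have heq : (⟨(k : ℕ) - 2, by have := k.isLt; omega⟩ : Fin (2 * n)) =
                ⟨(l : ℕ) - 2, by have := l.isLt; omega⟩ := by
              apply Fin.ext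
              show (k : ℕ) - 2 = (l : ℕ) - 2
              rw [hab]
            rw [if_pos hab, if_pos heq]
          · have hne : (⟨(k : ℕ) - 2, by have := k.isLt; omega⟩ : Fin (2 * n)) ≠
                ⟨(l : ℕ) - 2, by have := l.isLt; omega⟩ := by
              intro hcon
              apply hab
              apply Fin.ext
              have h2 : (k : ℕ) - 2 = (l : ℕ) - 2 := congrArg Fin.val hcon
              show (k : ℕ) = (l : ℕ)
              omega
            rw [if_neg hab, if_neg hne]
      refine ⟨v, η, horthv, ?_⟩
      intro i
      by_cases hi : (i : ℕ) = 0
      · have e0 : v ⟨2 * (i : ℕ), by have := i.isLt; omega⟩ = u := hv0 _ (by simp [hi])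
        have e1 : v ⟨2 * (i : ℕ) + 1, by have := i.isLt; omega⟩ = J u := hv1 _ (by simp [hi])
        have eη : η i = -μ := by rw [hη]; simp only; rw [dif_pos hi]
        refine ⟨?_, ?_, ?_, ?_⟩
        · rw [e0, e1]
        · rw [e0, e1, hJJu]
        · rw [e0, e1, eη, hFu]
        · rw [e0, e1, eη, hFJu, neg_neg]
      · have hiLt := i.isLt
        set p : Fin n := ⟨(i : ℕ) - 1, by omega⟩ with hp
        set m₁ : Fin (2 * n) := ⟨2 * (p : ℕ), by have := p.isLt; omega⟩ with hm₁
        set m₂ : Fin (2 * n) := ⟨2 * (p : ℕ) + 1, by have := p.isLt; omega⟩ with hm₂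
        have e0 : v ⟨2 * (i : ℕ), by have := i.isLt; omega⟩ = ↑(v' m₁) :=
          hvbig _ m₁ (show 2 * (i : ℕ) = 2 * ((i : ℕ) - 1) + 2 by omega)
        have e1 : v ⟨2 * (i : ℕ) + 1, by have := i.isLt; omega⟩ = ↑(v' m₂) :=
          hvbig _ m₂ (show 2 * (i : ℕ) + 1 = 2 * ((i : ℕ) - 1) + 1 + 2 by omega)
        have eη : η i = η' p := by rw [hη]; simp only; rw [dif_neg hi]
        obtain ⟨k1, k2, k3, k4⟩ := hprop' p
        refine ⟨?_, ?_, ?_, ?_⟩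
        · rw [e0, e1, ← hcoeJ]
          exact congrArg _ k1
        · rw [e0, e1, ← hcoeJ]
          rw [show J' (v' m₂) = -v' m₁ from k2]
          simp
        · rw [e0, e1, eη, ← hcoeF]
          rw [show F' (v' m₁) = η' p • v' m₂ from k3]
          simp
        · rw [e0, e1, eη, ← hcoeF]
          rw [show F' (v' m₂) = -η' p • v' m₁ from k4]
          simp

/-- if `J, F` are commuting skew-symmetric endomorphisms of a
`2n`-dimensional real inner product space with `J² = -Id`, then there is an orthonormal
basis `v₁,…,v_{2n}` and reals `η₁,…,η_n` with `J v_{2i-1} = v_{2i}`, `J v_{2i} = -v_{2i-1}`,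
`F v_{2i-1} = η_i v_{2i}`, `F v_{2i} = -η_i v_{2i-1}`. -/
theorem commuting_skew_normal_form
    {V : Type*} [NormedAddCommGroup V] [InnerProductSpace ℝ V] [FiniteDimensional ℝ V]
    (n : ℕ) (hdim : finrank ℝ V = 2 * n)
    (J F : V →ₗ[ℝ] V)
    (hJskew : ∀ x y : V, ⟪J x, y⟫ = -⟪x, J y⟫)
    (hFskew : ∀ x y : V, ⟪F x, y⟫ = -⟪x, F y⟫)
    (hJ2 : ∀ x : V, J (J x) = -x)
    (hJF : ∀ x : V, J (F x) = F (J x)) :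
    ∃ (b : OrthonormalBasis (Fin (2 * n)) ℝ V) (η : Fin n → ℝ),
      ∀ i : Fin n,
        J (b ⟨2 * i, by have := i.isLt; omega⟩) = b ⟨2 * i + 1, by have := i.isLt; omega⟩ ∧
        J (b ⟨2 * i + 1, by have := i.isLt; omega⟩) = -b ⟨2 * i, by have := i.isLt; omega⟩ ∧
        F (b ⟨2 * i, by have := i.isLt; omega⟩) =
          η i • b ⟨2 * i + 1, by have := i.isLt; omega⟩ ∧
        F (b ⟨2 * i + 1, by have := i.isLt; omega⟩) =
          -(η i) • b ⟨2 * i, by have := i.isLt; omega⟩ := by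
  obtain ⟨v, η, horth, hprop⟩ := aux_normal_form n V hdim J F hJskew hFskew hJ2 hJF
  rcases Nat.eq_zero_or_pos n with hn | hn
  · subst hn
    have hsub : Subsingleton V := by
      rw [← finrank_zero_iff (R := ℝ)]
      omega
    have hempty : IsEmpty (Fin (2 * 0)) := by simp; infer_instance
    let bb : Basis (Fin (2 * 0)) ℝ V := Basis.empty V
    have hob : Orthonormal ℝ bb := ⟨fun i => absurd i.isLt (by omega), by
      intro i
      exact absurd i.isLt (by omega)⟩
    exact ⟨bb.toOrthonormalBasis hob, fun i => 0, fun i => absurd i.isLt (by omega)⟩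
  · have hne : Nonempty (Fin (2 * n)) := ⟨⟨0, by omega⟩⟩
    have hcard : Fintype.card (Fin (2 * n)) = finrank ℝ V := by simp [hdim]
    let bb := basisOfOrthonormalOfCardEqFinrank horth hcard
    have hbb : ⇑bb = v := coe_basisOfOrthonormalOfCardEqFinrank horth hcard
    have hob : Orthonormal ℝ bb := by rw [hbb]; exact horth
    refine ⟨bb.toOrthonormalBasis hob, η, ?_⟩
    intro i
    have hcoe : ∀ k, (bb.toOrthonormalBasis hob) k = v k := by
      intro k
      rw [Basis.coe_toOrthonormalBasis, hbb]
    obtain ⟨k1, k2, k3, k4⟩ := hprop i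
    simp only [hcoe]
    exact ⟨k1, k2, k3, k4⟩
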